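/- Blow-ups at interior ceiling and floor points of the Heisenberg unit sphere: let N be a norm on ℝⁿ × ℝⁿ, λ > 0, σ ∈ {1, −1}, and let p = (a, b, σ/λ²) with N(a,b) < 1 (so ‖p‖ = 1). Then for every q = (x,y,z) ∈ H_{2n+1}(ℝ), the one-sided limit lim_{t→0⁺} (‖p·δ_t q‖ − 1)/t exists and equals σ·(λ²/4)·(a⋅y − b⋅x). -/

import Mathlib

open Filter Metric Real

noncomputable section

/-- The higher Heisenberg group `H_{2n+1}(ℝ)` as `ℝⁿ × ℝⁿ × ℝ`. -/
abbrev Heis (n : ℕ) := (Fin n → ℝ) × (Fin n → ℝ) × ℝ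

/-- Standard inner product on `ℝⁿ`. -/
def dotR {n : ℕ} (x y : Fin n → ℝ) : ℝ := ∑ i, x i * y i

/-- Heisenberg group product. -/
def Hmul {n : ℕ} (p q : Heis n) : Heis n :=
  (p.1 + q.1, p.2.1 + q.2.1,
    p.2.2 + q.2.2 + (1 / 2) * (dotR p.1 q.2.1 - dotR q.1 p.2.1))

/-- Heisenberg dilations `δ_t(x,y,z) = (tx, ty, t²z)`. -/
def Hdil {n : ℕ} (t : ℝ) (p : Heis n) : Heis n :=
  (t • p.1, t • p.2.1, t ^ 2 * p.2.2)

/-- The layered sup quasi-norm `max(N(x,y), λ√|z|)`. -/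
def layeredNorm {n : ℕ} (N : (Fin n → ℝ) × (Fin n → ℝ) → ℝ) (lam : ℝ) (p : Heis n) : ℝ :=
  max (N (p.1, p.2.1)) (lam * Real.sqrt |p.2.2|)

lemma dotR_smul_right {n : ℕ} (x y : Fin n → ℝ) (t : ℝ) :
    dotR x (t • y) = t * dotR x y := by
  simp [dotR, Finset.mul_sum, mul_comm, mul_left_comm]

lemma dotR_smul_left {n : ℕ} (x y : Fin n → ℝ) (t : ℝ) :
    dotR (t • x) y = t * dotR x y := by
  simp [dotR, Finset.mul_sum, mul_comm, mul_left_comm]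

lemma dotR_comm {n : ℕ} (x y : Fin n → ℝ) : dotR x y = dotR y x := by
  simp [dotR, mul_comm]

/-- **Blow-ups at interior ceiling and floor points.** At `p = (a, b, σ/λ²)` with
`N(a,b) < 1`, the one-sided limit of `(‖p·δ_t q‖ − 1)/t` as `t → 0⁺` exists and equals
`σ·(λ²/4)·(a⋅y − b⋅x)`. -/
theorem blowup_ceiling_floor (n : ℕ) (N : (Fin n → ℝ) × (Fin n → ℝ) → ℝ)
    (hN_add : ∀ u v, N (u + v) ≤ N u + N v)
    (hN_smul : ∀ (c : ℝ) u, N (c • u) = |c| * N u)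
    (hN_zero : ∀ u, N u = 0 ↔ u = 0)
    (lam : ℝ) (hlam : 0 < lam) (σ : ℝ) (hσ : σ = 1 ∨ σ = -1)
    (a b : Fin n → ℝ) (hab : N (a, b) < 1)
    (x y : Fin n → ℝ) (z : ℝ) :
    Tendsto
      (fun t : ℝ =>
        (layeredNorm N lam (Hmul (a, b, σ / lam ^ 2) (Hdil t (x, y, z))) - 1) / t)
      (nhdsWithin 0 (Set.Ioi 0))
      (nhds (σ * (lam ^ 2 / 4) * (dotR a y - dotR b x))) := by
  have hσ2 : σ * σ = 1 := by rcases hσ with h | h <;> rw [h] <;> norm_num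
  have hσabs : |σ| = 1 := by rcases hσ with h | h <;> rw [h] <;> norm_num
  set c : ℝ := dotR a y - dotR b x with hc
  set u : ℝ → ℝ := fun t => 1 / lam ^ 2 + σ * (c / 2) * t + σ * z * t ^ 2 with hu_def
  have hu0 : u 0 = 1 / lam ^ 2 := by simp [hu_def]
  have hu0pos : 0 < u 0 := by rw [hu0]; positivity
  have hucont : Continuous u := by fun_prop
  set F : ℝ → ℝ := fun t => lam * Real.sqrt (u t) with hF_def
  have hsq0 : Real.sqrt (u 0) = 1 / lam := by
    rw [hu0, show (1 : ℝ) / lam ^ 2 = (1 / lam) ^ 2 by ring]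
    exact Real.sqrt_sq (by positivity)
  have hF0 : F 0 = 1 := by
    rw [hF_def]; simp only [hsq0]; field_simp
  have hu' : HasDerivAt u (σ * (c / 2)) 0 := by
    have h := ((hasDerivAt_const (0:ℝ) (1 / lam ^ 2)).add
        ((hasDerivAt_id (0:ℝ)).const_mul (σ * (c / 2)))).add
        ((hasDerivAt_pow 2 (0:ℝ)).const_mul (σ * z))
    simpa [hu_def, Pi.add_def] using h
  have hF' : HasDerivAt F (σ * (lam ^ 2 / 4) * c) 0 := by
    have hs := (Real.hasDerivAt_sqrt (ne_of_gt hu0pos)).comp 0 hu'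
    have h2 := hs.const_mul lam
    convert h2 using 1
    · rfl
    · rfl
    · rfl
    rw [hsq0]
    field_simp
    ring
  have hslope : Tendsto (fun t => (F t - 1) / t) (nhdsWithin 0 (Set.Ioi 0))
      (nhds (σ * (lam ^ 2 / 4) * c)) := by
    have h := hasDerivAt_iff_tendsto_slope.mp hF'
    have h2 : Tendsto (slope F 0) (nhdsWithin 0 (Set.Ioi 0))
        (nhds (σ * (lam ^ 2 / 4) * c)) :=
      h.mono_left (nhdsWithin_mono 0 (fun t ht => ne_of_gt ht))
    refine h2.congr (fun t => ?_)
    rw [slope_def_field, hF0]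
    rw [sub_zero]
  have hFcont : Tendsto F (nhds 0) (nhds 1) := by
    have hFc : Continuous F := by
      rw [hF_def]; exact continuous_const.mul (Real.continuous_sqrt.comp hucont)
    simpa [hF0] using hFc.tendsto 0
  have hNline : Tendsto (fun t : ℝ => N (a, b) + t * N (x, y)) (nhds 0) (nhds (N (a, b))) := by
    have hcont : Continuous fun t : ℝ => N (a, b) + t * N (x, y) := by fun_prop
    simpa using hcont.tendsto 0
  have hev1 : ∀ᶠ t in nhds (0:ℝ), N (a, b) + t * N (x, y) < F t := by
    have hd := hFcont.sub hNline
    have h := hd.eventually (eventually_gt_nhds (show (0:ℝ) < 1 - N (a, b) by linarith))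
    filter_upwards [h] with t ht
    linarith
  have hev2 : ∀ᶠ t in nhds (0:ℝ), 0 < u t :=
    (hucont.tendsto 0).eventually (eventually_gt_nhds hu0pos)
  refine hslope.congr' ?_
  filter_upwards [self_mem_nhdsWithin, hev1.filter_mono nhdsWithin_le_nhds,
    hev2.filter_mono nhdsWithin_le_nhds] with t ht h1 h2
  have ht0 : (0:ℝ) < t := ht
  have hw : σ / lam ^ 2 + t ^ 2 * z + 1 / 2 * (dotR a (t • y) - dotR (t • x) b) = σ * u t := by
    have hut : u t = 1 / lam ^ 2 + σ * (c / 2) * t + σ * z * t ^ 2 := rfl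
    rw [hut, dotR_smul_right, dotR_smul_left, dotR_comm x b, hc]
    linear_combination (-(t * (dotR a y - dotR b x) / 2) - z * t ^ 2) * hσ2
  have habs : |σ / lam ^ 2 + t ^ 2 * z + 1 / 2 * (dotR a (t • y) - dotR (t • x) b)| = u t := by
    rw [hw, abs_mul, hσabs, one_mul, abs_of_pos h2]
  have hNle : N (a + t • x, b + t • y) ≤ N (a, b) + t * N (x, y) := by
    calc N (a + t • x, b + t • y) = N ((a, b) + t • (x, y)) := by
          simp [Prod.smul_mk, Prod.mk_add_mk]
      _ ≤ N (a, b) + N (t • (x, y)) := hN_add _ _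
      _ = N (a, b) + t * N (x, y) := by rw [hN_smul, abs_of_pos ht0]
  have hmax : layeredNorm N lam (Hmul (a, b, σ / lam ^ 2) (Hdil t (x, y, z))) = F t := by
    simp only [layeredNorm, Hmul, Hdil]
    rw [habs]
    exact max_eq_right (le_of_lt (lt_of_le_of_lt hNle h1))
  rw [hmax]
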